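/- In 𝒮, the product of the ideal (xz, xz²) with itself equals xz² · (x, xz, xz²), i.e. (xz, xz²)·(xz, xz²) = (x²z², x²z³, x²z⁴) = xz²·(x, xz, xz²) as ideals of 𝒮. Consequently the rule α ⊗ β ↦ (1/xz²)·αβ defines a surjective 𝒮-module homomorphism (xz, xz²) ⊗_𝒮 (xz, xz²) → (x, xz, xz²). -/

import Mathlib

set_option maxHeartbeats 1000000
set_option synthInstance.maxHeartbeats 400000

open MvPolynomial TensorProduct

/-- The ring `𝒮`: the `F`-subalgebra of `F[x,y,z]` generated by the six monomials
`x, xz, xz², y, yz, yz²` (the variables `x, y, z` are indexed by `0, 1, 2`). -/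
noncomputable def toricS (F : Type*) [CommRing F] : Subalgebra F (MvPolynomial (Fin 3) F) :=
  Algebra.adjoin F {X 0, X 0 * X 2, X 0 * X 2 ^ 2, X 1, X 1 * X 2, X 1 * X 2 ^ 2}

section elements

variable (F : Type*) [CommRing F]

/-- `x` as an element of `𝒮`. -/
noncomputable def sx : toricS F := ⟨X 0, Algebra.subset_adjoin (Or.inl rfl)⟩

/-- `xz` as an element of `𝒮`. -/
noncomputable def sxz : toricS F := ⟨X 0 * X 2, Algebra.subset_adjoin (Or.inr (Or.inl rfl))⟩

/-- `xz²` as an element of `𝒮`. -/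
noncomputable def sxz2 : toricS F :=
  ⟨X 0 * X 2 ^ 2, Algebra.subset_adjoin (Or.inr (Or.inr (Or.inl rfl)))⟩

/-- The ideal `J = (xz, xz²)` of `𝒮`, realizing the divisor class `𝒪(D₀)`. -/
noncomputable def Jideal : Ideal (toricS F) := Ideal.span {sxz F, sxz2 F}

/-- The ideal `W = (x, xz, xz²)` of `𝒮`, realizing the dualizing module `ω_𝒮 ≅ 𝒪(2D₀)`. -/
noncomputable def Wideal : Ideal (toricS F) := Ideal.span {sx F, sxz F, sxz2 F}

end elements

section aux

variable (F : Type*) [Field F]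

lemma toricS_e1 : sxz F * sxz F = sxz2 F * sx F := by
  apply Subtype.ext
  show (X 0 * X 2 : MvPolynomial (Fin 3) F) * (X 0 * X 2) = X 0 * X 2 ^ 2 * X 0
  ring

lemma toricS_JJ : Jideal F * Jideal F
    = Ideal.span {sxz F * sxz F, sxz F * sxz2 F, sxz2 F * sxz2 F} := by
  rw [Jideal, Ideal.span_mul_span']
  congr 1
  ext u
  simp only [Set.mem_mul, Set.mem_insert_iff, Set.mem_singleton_iff]
  constructor
  · rintro ⟨a, (rfl|rfl), b, (rfl|rfl), rfl⟩
    exacts [Or.inl rfl, Or.inr (Or.inl rfl), Or.inr (Or.inl (mul_comm _ _)),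
      Or.inr (Or.inr rfl)]
  · rintro (rfl|rfl|rfl)
    exacts [⟨_, Or.inl rfl, _, Or.inl rfl, rfl⟩, ⟨_, Or.inl rfl, _, Or.inr rfl, rfl⟩,
      ⟨_, Or.inr rfl, _, Or.inr rfl, rfl⟩]

lemma toricS_cW : Ideal.span {sxz2 F} * Wideal F
    = Ideal.span {sxz2 F * sx F, sxz2 F * sxz F, sxz2 F * sxz2 F} := by
  rw [Wideal, Ideal.span_mul_span']
  congr 1
  ext u
  simp only [Set.mem_mul, Set.mem_insert_iff, Set.mem_singleton_iff]
  constructor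
  · rintro ⟨a, rfl, b, (rfl|rfl|rfl), rfl⟩ <;> tauto
  · rintro (rfl|rfl|rfl)
    exacts [⟨_, rfl, _, Or.inl rfl, rfl⟩, ⟨_, rfl, _, Or.inr (Or.inl rfl), rfl⟩,
      ⟨_, rfl, _, Or.inr (Or.inr rfl), rfl⟩]

lemma toricS_JJ2 : Jideal F * Jideal F = Ideal.span {sxz2 F} * Wideal F := by
  rw [toricS_JJ, toricS_cW, toricS_e1, mul_comm (sxz F) (sxz2 F)]

lemma sxz2_ne_zero : sxz2 F ≠ 0 := by
  intro h
  have h2 : (X 0 * X 2 ^ 2 : MvPolynomial (Fin 3) F) = 0 := congrArg Subtype.val h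
  exact (mul_ne_zero (X_ne_zero 0) (pow_ne_zero 2 (X_ne_zero 2))) h2

lemma toricS_winj (w w' : Wideal F)
    (h : sxz2 F * (w : toricS F) = sxz2 F * (w' : toricS F)) : w = w' :=
  Subtype.ext (mul_left_cancel₀ (sxz2_ne_zero F) h)

lemma toricS_mem_key (a b : Jideal F) :
    ∃ z ∈ Wideal F, sxz2 F * z = (a : toricS F) * (b : toricS F) := by
  have h : (a : toricS F) * (b : toricS F) ∈ Ideal.span {sxz2 F} * Wideal F := by
    rw [← toricS_JJ2]
    exact Ideal.mul_mem_mul a.2 b.2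
  exact Ideal.mem_span_singleton_mul.mp h

/-- The element `(1/xz²)·αβ` of `W`, for `α, β ∈ J`. -/
noncomputable def toricQ (a b : Jideal F) : Wideal F :=
  ⟨(toricS_mem_key F a b).choose, (toricS_mem_key F a b).choose_spec.1⟩

lemma toricQ_spec (a b : Jideal F) :
    sxz2 F * (toricQ F a b : toricS F) = (a : toricS F) * (b : toricS F) :=
  (toricS_mem_key F a b).choose_spec.2

/-- `toricQ` as a bilinear map `J →ₗ J →ₗ W`. -/
noncomputable def toricBL :
    (Jideal F) →ₗ[toricS F] (Jideal F) →ₗ[toricS F] (Wideal F) :=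
  LinearMap.mk₂ (toricS F) (toricQ F)
    (fun a a' b => toricS_winj F _ _ (by
      simp only [toricQ_spec, Submodule.coe_add, mul_add, add_mul]))
    (fun r a b => toricS_winj F _ _ (by
      simp only [toricQ_spec, SetLike.val_smul, smul_eq_mul]
      rw [mul_left_comm (sxz2 F) r, toricQ_spec]
      ring))
    (fun a b b' => toricS_winj F _ _ (by
      simp only [toricQ_spec, Submodule.coe_add, mul_add]))
    (fun r a b => toricS_winj F _ _ (by
      simp only [toricQ_spec, SetLike.val_smul, smul_eq_mul]
      rw [mul_left_comm (sxz2 F) r, toricQ_spec]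
      ring))

/-- The induced linear map `J ⊗ J → W`. -/
noncomputable def toricF :
    ((Jideal F) ⊗[toricS F] (Jideal F)) →ₗ[toricS F] (Wideal F) :=
  TensorProduct.lift (toricBL F)

lemma toricF_tmul (a b : Jideal F) : toricF F (a ⊗ₜ[toricS F] b) = toricQ F a b := by
  rw [toricF, TensorProduct.lift.tmul, toricBL, LinearMap.mk₂_apply]

noncomputable def jxz : Jideal F := ⟨sxz F, Ideal.subset_span (Or.inl rfl)⟩
noncomputable def jxz2 : Jideal F := ⟨sxz2 F, Ideal.subset_span (Or.inr rfl)⟩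

lemma toricF_surj : Function.Surjective (toricF F) := by
  have hgen : ∀ y (hy : y ∈ Wideal F),
      (⟨y, hy⟩ : Wideal F) ∈ LinearMap.range (toricF F) := by
    intro y hy
    refine Submodule.span_induction
      (p := fun y hy => (⟨y, hy⟩ : Wideal F) ∈ LinearMap.range (toricF F))
      ?_ ?_ ?_ ?_ hy
    · rintro g (rfl|rfl|rfl)
      · refine ⟨jxz F ⊗ₜ[toricS F] jxz F, toricS_winj F _ _ ?_⟩
        rw [toricF_tmul, toricQ_spec]
        exact toricS_e1 F
      · refine ⟨jxz F ⊗ₜ[toricS F] jxz2 F, toricS_winj F _ _ ?_⟩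
        rw [toricF_tmul, toricQ_spec]
        exact mul_comm _ _
      · refine ⟨jxz2 F ⊗ₜ[toricS F] jxz2 F, toricS_winj F _ _ ?_⟩
        rw [toricF_tmul, toricQ_spec]
        rfl
    · have h0 : (⟨(0 : toricS F), (Wideal F).zero_mem⟩ : Wideal F) = 0 := rfl
      rw [h0]
      exact zero_mem _
    · intro u v hu hv h1 h2
      have huv : (⟨u + v, (Wideal F).add_mem hu hv⟩ : Wideal F)
          = (⟨u, hu⟩ : Wideal F) + ⟨v, hv⟩ := rfl
      rw [huv]
      exact add_mem h1 h2
    · intro r u hu h1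
      have hru : (⟨r • u, (Wideal F).smul_mem r hu⟩ : Wideal F)
          = r • (⟨u, hu⟩ : Wideal F) := rfl
      rw [hru]
      exact Submodule.smul_mem _ r h1
  rintro ⟨y, hy⟩
  exact hgen y hy

end aux

/-- In `𝒮` one has `(xz, xz²)·(xz, xz²) = (x²z², x²z³, x²z⁴) = xz²·(x, xz, xz²)` as ideals;
consequently the rule `α ⊗ β ↦ (1/xz²)·αβ` defines a surjective `𝒮`-module homomorphism
`(xz, xz²) ⊗_𝒮 (xz, xz²) → (x, xz, xz²)`, i.e. there is a surjective `𝒮`-linear map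
`f : J ⊗ J → W` with `xz² · f(α ⊗ β) = α·β` for all `α, β ∈ J`. -/
theorem toricS_square_of_divisor_ideal (ℓ : ℕ) (hℓ : ℓ.Prime) (hℓ2 : 2 < ℓ)
    (F : Type*) [Field F] [Fintype F] [CharP F ℓ] :
    (Jideal F * Jideal F
        = Ideal.span {sxz F * sxz F, sxz F * sxz2 F, sxz2 F * sxz2 F}) ∧
    (Jideal F * Jideal F = Ideal.span {sxz2 F} * Wideal F) ∧
    ∃ f : ((Jideal F) ⊗[toricS F] (Jideal F)) →ₗ[toricS F] (Wideal F),
      Function.Surjective f ∧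
      ∀ a b : Jideal F,
        ((f (a ⊗ₜ[toricS F] b) : Wideal F) : toricS F) * sxz2 F
          = (a : toricS F) * (b : toricS F) := by
  refine ⟨toricS_JJ F, toricS_JJ2 F, toricF F, toricF_surj F, fun a b => ?_⟩
  rw [toricF_tmul, mul_comm]
  exact toricQ_spec F a b
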